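/- Let ℓ be a positive integer, 0 ≤ v ≤ 5ℓ − 1, and let Γ₁, Γ₂ be the enumerating functions of ⟨2, 10ℓ+1⟩ and ⟨5, 25ℓ+1⟩. Then min over 0 ≤ k ≤ 5ℓ of (Γ₂(k+v) − Γ₁(k)) equals 5v, attained at k = 0. -/
import Mathlib

/-- Membership in the numerical semigroup `⟨2, 10ℓ+1⟩`. -/
def inGamma1 (ℓ : ℕ) (x : ℕ) : Prop := ∃ a b : ℕ, x = 2 * a + (10 * ℓ + 1) * b

/-- Membership in the numerical semigroup `⟨5, 25ℓ+1⟩`. -/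
def inGamma2 (ℓ : ℕ) (x : ℕ) : Prop := ∃ a b : ℕ, x = 5 * a + (25 * ℓ + 1) * b

lemma mem1 (ℓ x : ℕ) : inGamma1 ℓ x ↔ (x % 2 = 0 ∨ 10 * ℓ + 1 ≤ x) := by
  constructor
  · rintro ⟨a, b, rfl⟩
    rcases b with _ | c
    · left; omega
    · right
      have h : (10 * ℓ + 1) * (c + 1) = (10 * ℓ + 1) * c + (10 * ℓ + 1) := by ring
      have h2 : 0 ≤ (10 * ℓ + 1) * c := Nat.zero_le _
      omega
  · intro h
    rcases Nat.even_or_odd x with he | ho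
    · have h2 : x % 2 = 0 := Nat.even_iff.mp he
      exact ⟨x / 2, 0, by omega⟩
    · have hx2 : x % 2 = 1 := Nat.odd_iff.mp ho
      have hle : 10 * ℓ + 1 ≤ x := by omega
      refine ⟨(x - (10 * ℓ + 1)) / 2, 1, ?_⟩
      have hy : (10 * ℓ + 1) % 2 = 1 := by omega
      generalize 10 * ℓ + 1 = y at *
      omega

lemma mem2 (ℓ x : ℕ) : inGamma2 ℓ x ↔ (25 * ℓ + 1) * (x % 5) ≤ x := by
  constructor
  · rintro ⟨a, b, rfl⟩
    have h1 : 5 * a + (25 * ℓ + 1) * b = 5 * (a + 5 * ℓ * b) + b := by ring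
    rw [h1, Nat.mul_add_mod]
    calc (25 * ℓ + 1) * (b % 5) ≤ (25 * ℓ + 1) * b :=
          Nat.mul_le_mul_left _ (Nat.mod_le b 5)
      _ ≤ 5 * (a + 5 * ℓ * b) + b := by
          have : (25 * ℓ + 1) * b = 5 * (5 * ℓ * b) + b := by ring
          have h2 : 5 * ℓ * b ≤ a + 5 * ℓ * b := Nat.le_add_left _ _
          omega
  · intro h
    refine ⟨x / 5 - 5 * ℓ * (x % 5), x % 5, ?_⟩
    have h4 : (25 * ℓ + 1) * (x % 5) = 5 * (5 * ℓ * (x % 5)) + x % 5 := by ring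
    generalize hs : 5 * ℓ * (x % 5) = s at *
    omega

instance dec1 (ℓ : ℕ) : DecidablePred (inGamma1 ℓ) :=
  fun x => decidable_of_iff _ (mem1 ℓ x).symm

instance dec2 (ℓ : ℕ) : DecidablePred (inGamma2 ℓ) :=
  fun x => decidable_of_iff _ (mem2 ℓ x).symm


/-- The enumerating function of `⟨5, 25ℓ+1⟩` on the relevant range. -/
def g (ℓ j : ℕ) : ℕ :=
  if j ≤ 5 * ℓ then 5 * j else 25 * ℓ + 5 * ((j - 5 * ℓ) / 2) + (j - 5 * ℓ) % 2

lemma gval1 (ℓ j : ℕ) (h : j ≤ 5 * ℓ) : g ℓ j = 5 * j := by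
  unfold g; split <;> omega

lemma gval2 (ℓ j : ℕ) (h : 5 * ℓ ≤ j) :
    g ℓ j = 25 * ℓ + 5 * ((j - 5 * ℓ) / 2) + (j - 5 * ℓ) % 2 := by
  unfold g; split <;> omega

lemma notmem2 (ℓ x : ℕ) (h : x % 5 ≠ 0) (h2 : x < 25 * ℓ + 1) : ¬ inGamma2 ℓ x := by
  rw [mem2]
  intro hc
  have : (25 * ℓ + 1) * 1 ≤ (25 * ℓ + 1) * (x % 5) := Nat.mul_le_mul_left _ (by omega)
  omega

lemma notmem2' (ℓ x : ℕ) (h : 2 ≤ x % 5) (h2 : x < 2 * (25 * ℓ + 1)) : ¬ inGamma2 ℓ x := by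
  rw [mem2]
  intro hc
  have : (25 * ℓ + 1) * 2 ≤ (25 * ℓ + 1) * (x % 5) := Nat.mul_le_mul_left _ h
  omega

lemma count1 (ℓ : ℕ) : ∀ k, k ≤ 5 * ℓ → Nat.count (inGamma1 ℓ) (2 * k) = k := by
  intro k
  induction k with
  | zero => simp
  | succ n ih =>
    intro h
    rw [show 2 * (n + 1) = (2 * n + 1) + 1 by ring, Nat.count_succ, Nat.count_succ,
      ih (by omega)]
    have e1 : inGamma1 ℓ (2 * n) := ⟨n, 0, by ring⟩
    have e2 : ¬ inGamma1 ℓ (2 * n + 1) := by rw [mem1]; omega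
    simp [e1, e2]

lemma count2 (ℓ : ℕ) : ∀ j, j ≤ 10 * ℓ → Nat.count (inGamma2 ℓ) (g ℓ j) = j := by
  intro j
  induction j with
  | zero => simp [gval1 ℓ 0 (by omega)]
  | succ n ih =>
    intro h
    rcases lt_or_ge n (5 * ℓ) with hn | hn
    · -- g n = 5n, g (n+1) = 5n+5
      rw [gval1 ℓ (n + 1) (by omega)]
      have e0 : inGamma2 ℓ (5 * n) := ⟨n, 0, by ring⟩
      have e1 : ¬ inGamma2 ℓ (5 * n + 1) := notmem2 ℓ _ (by omega) (by omega)
      have e2 : ¬ inGamma2 ℓ (5 * n + 2) := notmem2 ℓ _ (by omega) (by omega)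
      have e3 : ¬ inGamma2 ℓ (5 * n + 3) := notmem2 ℓ _ (by omega) (by omega)
      have e4 : ¬ inGamma2 ℓ (5 * n + 4) := notmem2 ℓ _ (by omega) (by omega)
      rw [show 5 * (n + 1) = (5 * n + 4) + 1 by ring, Nat.count_succ,
        show 5 * n + 4 = (5 * n + 3) + 1 by ring, Nat.count_succ,
        show 5 * n + 3 = (5 * n + 2) + 1 by ring, Nat.count_succ,
        show 5 * n + 2 = (5 * n + 1) + 1 by ring, Nat.count_succ,
        show 5 * n + 1 = (5 * n) + 1 by ring, Nat.count_succ]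
      have ihn := ih (by omega)
      rw [gval1 ℓ n (by omega)] at ihn
      rw [ihn]
      simp [e0, e1, e2, e3, e4]
    · -- n ≥ 5ℓ
      set d := n - 5 * ℓ with hd
      have hgn : g ℓ n = 25 * ℓ + 5 * (d / 2) + d % 2 := gval2 ℓ n (by omega)
      have hgn1 : g ℓ (n + 1) = 25 * ℓ + 5 * ((d + 1) / 2) + (d + 1) % 2 := by
        rw [gval2 ℓ (n + 1) (by omega)]; congr 2 <;> omega
      rcases Nat.even_or_odd d with hpar | hpar
      · -- d even: step of 1
        have h2 : d % 2 = 0 := Nat.even_iff.mp hpar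
        have hstep : g ℓ (n + 1) = g ℓ n + 1 := by rw [hgn, hgn1]; omega
        have e0 : inGamma2 ℓ (g ℓ n) := by
          rw [hgn]
          exact ⟨5 * ℓ + d / 2, 0, by omega⟩
        rw [hstep, Nat.count_succ, ih (by omega)]
        simp [e0]
      · -- d odd: step of 4
        have h2 : d % 2 = 1 := Nat.odd_iff.mp hpar
        have hstep : g ℓ (n + 1) = g ℓ n + 4 := by rw [hgn, hgn1]; omega
        have hdle : d ≤ 5 * ℓ - 1 + (n + 1 - 10 * ℓ) := by omega
        have hd5 : d ≤ 5 * ℓ - 1 := by omega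
        have hdiv : 2 * (d / 2) ≤ d := by omega
        have e0 : inGamma2 ℓ (g ℓ n) := by
          rw [hgn, h2]
          exact ⟨d / 2, 1, by ring⟩
        have e1 : ¬ inGamma2 ℓ (g ℓ n + 1) := by
          apply notmem2' ℓ _ ?_ ?_ <;> rw [hgn] <;> omega
        have e2 : ¬ inGamma2 ℓ (g ℓ n + 2) := by
          apply notmem2' ℓ _ ?_ ?_ <;> rw [hgn] <;> omega
        have e3 : ¬ inGamma2 ℓ (g ℓ n + 3) := by
          apply notmem2' ℓ _ ?_ ?_ <;> rw [hgn] <;> omega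
        rw [hstep, show g ℓ n + 4 = (g ℓ n + 3) + 1 from rfl, Nat.count_succ,
          show g ℓ n + 3 = (g ℓ n + 2) + 1 from rfl, Nat.count_succ,
          show g ℓ n + 2 = (g ℓ n + 1) + 1 from rfl, Nat.count_succ,
          show g ℓ n + 1 = g ℓ n + 1 from rfl, Nat.count_succ, ih (by omega)]
        simp [e0, e1, e2, e3]

lemma memg2 (ℓ j : ℕ) (h : j ≤ 10 * ℓ) : inGamma2 ℓ (g ℓ j) := by
  rcases le_or_gt j (5 * ℓ) with hj | hj
  · rw [gval1 ℓ j hj]; exact ⟨j, 0, by ring⟩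
  · rw [gval2 ℓ j (by omega)]
    set d := j - 5 * ℓ with hd
    rcases Nat.even_or_odd d with hpar | hpar
    · have h2 : d % 2 = 0 := Nat.even_iff.mp hpar
      exact ⟨5 * ℓ + d / 2, 0, by omega⟩
    · have h2 : d % 2 = 1 := Nat.odd_iff.mp hpar
      rw [h2]
      exact ⟨d / 2, 1, by ring⟩

lemma nth1 (ℓ k : ℕ) (h : k ≤ 5 * ℓ) : Nat.nth (inGamma1 ℓ) k = 2 * k := by
  conv_lhs => rw [← count1 ℓ k h]
  exact Nat.nth_count ⟨k, 0, by ring⟩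

lemma nth2 (ℓ j : ℕ) (h : j ≤ 10 * ℓ) : Nat.nth (inGamma2 ℓ) j = g ℓ j := by
  conv_lhs => rw [← count2 ℓ j h]
  exact Nat.nth_count (memg2 ℓ j h)

/-- For `0 ≤ v ≤ 5ℓ − 1`, the minimum over `0 ≤ k ≤ 5ℓ` of `Γ₂(k+v) − Γ₁(k)`
equals `5v`, attained at `k = 0`. -/
theorem stmt_8 (ℓ v : ℕ) (hℓ : 0 < ℓ) (hv : v ≤ 5 * ℓ - 1) :
    (∀ k : ℕ, k ≤ 5 * ℓ →
      (5 * v : ℤ) ≤ (Nat.nth (inGamma2 ℓ) (k + v) : ℤ) - (Nat.nth (inGamma1 ℓ) k : ℤ)) ∧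
    (Nat.nth (inGamma2 ℓ) (0 + v) : ℤ) - (Nat.nth (inGamma1 ℓ) 0 : ℤ) = 5 * v := by
  have hv' : v ≤ 5 * ℓ - 1 := hv
  constructor
  · intro k hk
    rw [nth1 ℓ k hk, nth2 ℓ (k + v) (by omega)]
    have key : 5 * v + 2 * k ≤ g ℓ (k + v) := by
      unfold g; split <;> omega
    push_cast
    omega
  · rw [nth1 ℓ 0 (by omega), nth2 ℓ (0 + v) (by omega),
      show (0 : ℕ) + v = v from Nat.zero_add v, gval1 ℓ v (by omega)]
    push_cast
    ring
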